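/- Let θ ∈ [0,1), suppose ‖H‖ ≤ M_H for some M_H > 0, let g = GᵀR, and suppose s ∈ ℝⁿ satisfies (H + γI)s = −g + t with ‖t‖ ≤ θ √(γ/(‖H‖ + γ)) ‖g‖. Then the model decrease satisfies m_γ(0) − m_γ(s) ≥ ((1 − θ²)/2) · ‖GᵀR‖² / (M_H + γ). -/

import Mathlib

open Matrix
open scoped Matrix.Norms.L2Operator RealInnerProductSpace

set_option maxHeartbeats 1000000 in
/-- An inexact step `s` with `(H+γI)s = -g + t`,
`‖t‖ ≤ θ√(γ/(‖H‖+γ))‖g‖`, `g = GᵀR`, `‖H‖ ≤ M_H`, yields the model decrease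
`m_γ(0) - m_γ(s) ≥ ((1-θ²)/2)·‖GᵀR‖²/(M_H+γ)`. -/
theorem inexact_model_decrease
    (n m : ℕ) (hn : 0 < n) (hm : 0 < m)
    (G : Matrix (Fin m) (Fin n) ℝ) (R : EuclideanSpace ℝ (Fin m))
    (H : Matrix (Fin n) (Fin n) ℝ) (hH : H.PosSemidef)
    (γ : ℝ) (hγ : 0 < γ)
    (θ : ℝ) (hθ : θ ∈ Set.Ico (0:ℝ) 1)
    (M_H : ℝ) (hMH : 0 < M_H) (hHbd : ‖H‖ ≤ M_H)
    (g : EuclideanSpace ℝ (Fin n)) (hg : g = Matrix.toEuclideanLin Gᵀ R)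
    (mγ : EuclideanSpace ℝ (Fin n) → ℝ)
    (hmγ : ∀ v, mγ v = (1/2) * ‖R‖^2 + ⟪g, v⟫ +
      (1/2) * ⟪v, Matrix.toEuclideanLin (H + γ • (1 : Matrix (Fin n) (Fin n) ℝ)) v⟫)
    (s t : EuclideanSpace ℝ (Fin n))
    (hstep : Matrix.toEuclideanLin (H + γ • (1 : Matrix (Fin n) (Fin n) ℝ)) s = -g + t)
    (ht : ‖t‖ ≤ θ * Real.sqrt (γ / (‖H‖ + γ)) * ‖g‖) :
    mγ 0 - mγ s ≥ ((1 - θ^2)/2) * ‖g‖^2 / (M_H + γ) := by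
  obtain ⟨hθ0, hθ1⟩ := hθ
  have hHn : (0:ℝ) ≤ ‖H‖ := norm_nonneg _
  set β : ℝ := ‖H‖ + γ with hβdef
  have hβ : 0 < β := by positivity
  have hδ : 0 < M_H + γ := by positivity
  have hβδ : β ≤ M_H + γ := by simp only [hβdef]; linarith
  set L := Matrix.toEuclideanLin (H + γ • (1 : Matrix (Fin n) (Fin n) ℝ)) with hLdef
  -- Hermitian and symmetry
  have hHerm : (H + γ • (1 : Matrix (Fin n) (Fin n) ℝ)).IsHermitian := by
    refine hH.1.add ?_
    simp [Matrix.IsHermitian, Matrix.conjTranspose_smul]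
  have hsym : ∀ x y : EuclideanSpace ℝ (Fin n), ⟪L x, y⟫ = ⟪x, L y⟫ := fun x y =>
    (Matrix.isHermitian_iff_isSymmetric.mp hHerm) x y
  -- decomposition of L
  have hLdecomp : L = Matrix.toEuclideanLin H + γ • LinearMap.id := by
    rw [hLdef, map_add, _root_.map_smul]
    congr 1
    apply LinearMap.ext
    intro x
    simp [Matrix.toEuclideanLin_apply]
  have hQH0 : ∀ x : EuclideanSpace ℝ (Fin n), 0 ≤ ⟪x, Matrix.toEuclideanLin H x⟫ := by
    intro x
    have h := hH.dotProduct_mulVec_nonneg (WithLp.ofLp x)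
    rw [EuclideanSpace.inner_eq_star_dotProduct, Matrix.ofLp_toEuclideanLin_apply]
    rw [dotProduct_comm]; exact h
  have hQHub : ∀ x : EuclideanSpace ℝ (Fin n),
      ⟪x, Matrix.toEuclideanLin H x⟫ ≤ ‖H‖ * ‖x‖^2 := by
    intro x
    have h1 : ⟪x, Matrix.toEuclideanLin H x⟫ ≤ ‖x‖ * ‖Matrix.toEuclideanLin H x‖ :=
      real_inner_le_norm _ _
    have h2 : ‖Matrix.toEuclideanLin H x‖ ≤ ‖H‖ * ‖x‖ := by
      simpa [Matrix.toEuclideanLin_apply] using H.l2_opNorm_mulVec x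
    have h3 : ‖x‖ * ‖Matrix.toEuclideanLin H x‖ ≤ ‖x‖ * (‖H‖ * ‖x‖) :=
      mul_le_mul_of_nonneg_left h2 (norm_nonneg x)
    nlinarith [norm_nonneg x]
  have hQ : ∀ x : EuclideanSpace ℝ (Fin n),
      ⟪x, L x⟫ = ⟪x, Matrix.toEuclideanLin H x⟫ + γ * ‖x‖^2 := by
    intro x
    rw [hLdecomp]
    simp only [LinearMap.add_apply, LinearMap.smul_apply, LinearMap.id_coe, id_eq,
      inner_add_right, real_inner_smul_right]
    rw [real_inner_self_eq_norm_sq]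
  have hQlb : ∀ x : EuclideanSpace ℝ (Fin n), γ * ‖x‖^2 ≤ ⟪x, L x⟫ := by
    intro x; rw [hQ]; linarith [hQH0 x]
  have hQub : ∀ x : EuclideanSpace ℝ (Fin n), ⟪x, L x⟫ ≤ β * ‖x‖^2 := by
    intro x; rw [hQ]; have := hQHub x; simp only [hβdef]; nlinarith [norm_nonneg x]
  have hQ0 : ∀ x : EuclideanSpace ℝ (Fin n), 0 ≤ ⟪x, L x⟫ := by
    intro x
    refine le_trans ?_ (hQlb x)
    positivity
  -- injectivity and surjectivity
  have hinj : Function.Injective L := by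
    intro x y hxy
    have h0 : L (x - y) = 0 := by rw [map_sub, hxy, sub_self]
    have h2 := hQlb (x - y)
    rw [h0, inner_zero_right] at h2
    have h3 : ‖x - y‖ ^ 2 ≤ 0 := by nlinarith [h2, hγ]
    have h4 : ‖x - y‖ = 0 := by
      have := le_antisymm h3 (sq_nonneg ‖x - y‖)
      exact pow_eq_zero_iff (by norm_num) |>.mp this
    exact sub_eq_zero.mp (norm_eq_zero.mp h4)
  have hsurj : Function.Surjective L := LinearMap.injective_iff_surjective.mp hinj
  obtain ⟨u, hu⟩ := hsurj g
  obtain ⟨v, hv⟩ := hsurj t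
  have hs : s = v - u := by
    apply hinj
    rw [map_sub, hu, hv, hstep]
    abel
  -- Cauchy-Schwarz for the bilinear form
  have hBsym : ∀ x y : EuclideanSpace ℝ (Fin n), ⟪y, L x⟫ = ⟪x, L y⟫ := by
    intro x y
    rw [← hsym x y]
    exact real_inner_comm (L x) y
  have hCS : ∀ x y : EuclideanSpace ℝ (Fin n), ⟪x, L y⟫^2 ≤ ⟪x, L x⟫ * ⟪y, L y⟫ := by
    intro x y
    have hquad : ∀ r : ℝ, 0 ≤ ⟪y, L y⟫ * (r * r) + (2 * ⟪x, L y⟫) * r + ⟪x, L x⟫ := by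
      intro r
      have h := hQ0 (x + r • y)
      have hexp : ⟪x + r • y, L (x + r • y)⟫ =
          ⟪x, L x⟫ + r * ⟪x, L y⟫ + r * ⟪y, L x⟫ + r * r * ⟪y, L y⟫ := by
        rw [map_add, _root_.map_smul]
        simp only [inner_add_left, inner_add_right, real_inner_smul_left, real_inner_smul_right]
        ring
      rw [hexp, hBsym x y] at h
      nlinarith [h]
    have hd := discrim_le_zero hquad
    rw [discrim] at hd
    nlinarith [hd]
  -- key bound 1 : ‖g‖² ≤ β * ⟪u, L u⟫
  have hgLg : ⟪g, L g⟫ ≤ β * ‖g‖^2 := hQub g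
  have hgsq : ‖g‖^2 = ⟪u, L g⟫ := by
    rw [← hu, ← hsym u (L u), real_inner_self_eq_norm_sq]
  have k1 : ‖g‖^2 ≤ β * ⟪u, L u⟫ := by
    have hcs := hCS u g
    rw [← hgsq] at hcs
    rcases eq_or_lt_of_le (sq_nonneg ‖g‖) with h0 | hpos
    · rw [← h0]; exact mul_nonneg hβ.le (hQ0 u)
    · have hp := mul_le_mul_of_nonneg_left hgLg (hQ0 u)
      nlinarith [hcs, hp, hpos, hQ0 u]
  -- key bound 2 : γ * ⟪v, L v⟫ ≤ ‖t‖²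
  have k2 : γ * ⟪v, L v⟫ ≤ ‖t‖^2 := by
    have h1 : ⟪v, L v⟫ = ⟪v, t⟫ := by rw [hv]
    have h2 : ⟪v, t⟫ ≤ ‖v‖ * ‖t‖ := real_inner_le_norm _ _
    have h3 := hQlb v
    rcases eq_or_lt_of_le (hQ0 v) with h0 | hpos
    · rw [← h0, mul_zero]; positivity
    · have hsq : ⟪v, L v⟫^2 ≤ ‖v‖^2 * ‖t‖^2 := by
        nlinarith [h1, h2, hpos, norm_nonneg v, norm_nonneg t]
      have p1 : γ * ⟪v, L v⟫^2 ≤ γ * (‖v‖^2 * ‖t‖^2) :=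
        mul_le_mul_of_nonneg_left hsq hγ.le
      have p2 : γ * ‖v‖^2 * ‖t‖^2 ≤ ⟪v, L v⟫ * ‖t‖^2 :=
        mul_le_mul_of_nonneg_right h3 (sq_nonneg ‖t‖)
      nlinarith [p1, p2, hpos]
  -- squared residual bound
  have k3 : ‖t‖^2 ≤ θ^2 * (γ / β) * ‖g‖^2 := by
    have hc : (0:ℝ) ≤ γ / β := by positivity
    have hs2 : Real.sqrt (γ / β) * Real.sqrt (γ / β) = γ / β := Real.mul_self_sqrt hc
    have hrhs : 0 ≤ θ * Real.sqrt (γ / β) * ‖g‖ := by positivity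
    have hm2 := mul_le_mul ht ht (norm_nonneg t) hrhs
    calc ‖t‖^2 = ‖t‖ * ‖t‖ := by ring
      _ ≤ (θ * Real.sqrt (γ / β) * ‖g‖) * (θ * Real.sqrt (γ / β) * ‖g‖) := hm2
      _ = θ^2 * (Real.sqrt (γ / β) * Real.sqrt (γ / β)) * ‖g‖^2 := by ring
      _ = θ^2 * (γ / β) * ‖g‖^2 := by rw [hs2]
  -- model decrease identity
  have e1 : ⟪g, s⟫ = ⟪u, t⟫ - ⟪u, L u⟫ := by
    rw [hs, inner_sub_right]
    have h1 : ⟪g, v⟫ = ⟪u, t⟫ := by rw [← hu, hsym u v, hv]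
    have h2 : ⟪g, u⟫ = ⟪u, L u⟫ := by rw [← hu]; exact real_inner_comm u (L u)
    rw [h1, h2]
  have e2 : ⟪s, L s⟫ = ⟪u, L u⟫ + ⟪v, L v⟫ - 2 * ⟪u, t⟫ := by
    have hLs : L s = -g + t := hstep
    rw [hLs, inner_add_right, inner_neg_right]
    have h1 : ⟪s, g⟫ = ⟪u, t⟫ - ⟪u, L u⟫ := (real_inner_comm g s).trans e1
    have h2 : ⟪s, t⟫ = ⟪v, L v⟫ - ⟪u, t⟫ := by
      rw [hs, inner_sub_left]
      congr 1
      rw [hv]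
    rw [h1, h2]; ring
  have hdec : mγ 0 - mγ s = (⟪u, L u⟫ - ⟪v, L v⟫) / 2 := by
    rw [hmγ 0, hmγ s]
    simp only [inner_zero_right, map_zero, inner_zero_left]
    rw [e1, e2]
    ring
  -- final arithmetic
  rw [hdec, ge_iff_le]
  have k3' : β * ‖t‖^2 ≤ θ^2 * γ * ‖g‖^2 := by
    have h := mul_le_mul_of_nonneg_left k3 hβ.le
    have heq : β * (θ^2 * (γ / β) * ‖g‖^2) = θ^2 * γ * ‖g‖^2 := by
      field_simp
    rw [heq] at h
    exact h
  have kQv : β * ⟪v, L v⟫ ≤ θ^2 * ‖g‖^2 := by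
    have h := mul_le_mul_of_nonneg_left k2 hβ.le
    nlinarith [h, k3', hγ]
  have h5 : (1 - θ^2) * ‖g‖^2 ≤ β * (⟪u, L u⟫ - ⟪v, L v⟫) := by nlinarith [k1, kQv]
  have h6 : (1 - θ^2) * ‖g‖^2 / (M_H + γ) ≤ (1 - θ^2) * ‖g‖^2 / β := by
    apply div_le_div_of_nonneg_left _ hβ hβδ
    have hθsq : θ^2 ≤ 1 := by nlinarith [hθ0, hθ1]
    exact mul_nonneg (by linarith) (sq_nonneg _)
  have h7 : (1 - θ^2) * ‖g‖^2 / β ≤ ⟪u, L u⟫ - ⟪v, L v⟫ := by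
    rw [div_le_iff₀ hβ]
    nlinarith [h5]
  calc ((1 - θ^2)/2) * ‖g‖^2 / (M_H + γ) = ((1 - θ^2) * ‖g‖^2 / (M_H + γ)) / 2 := by ring
    _ ≤ ((1 - θ^2) * ‖g‖^2 / β) / 2 := by linarith
    _ ≤ (⟪u, L u⟫ - ⟪v, L v⟫) / 2 := by linarith
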